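/- Let α₁, α₂ > 0, μ > 1, δ₁ > 2√(α₁α₂), let a < b be the roots of α₁z² − δ₁z + α₂ = 0, and let 0 < k < 1. Then for every V₀ ≥ 0 with V₀^(1/μ) ≤ k·a, the integral ∫₀^{V₀} dV/(α₁V^(1+1/μ) + α₂V^(1−1/μ) − δ₁V) is at most (μ/(α₁(b − a)))·(log((b − ka)/(a(1 − k))) − log(b/a)). -/

import Mathlib

open Real MeasureTheory intervalIntegral

set_option maxHeartbeats 1000000 in
theorem stmt_8 (α₁ α₂ μ δ₁ γ₁ γ₂ k : ℝ) (h1 : 0 < α₁) (h2 : 0 < α₂) (hμ : 1 < μ)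
    (hγ₁ : γ₁ = 1 + 1 / μ) (hγ₂ : γ₂ = 1 - 1 / μ)
    (hδ : 2 * Real.sqrt (α₁ * α₂) < δ₁) (hk0 : 0 < k) (hk1 : k < 1)
    (a b : ℝ) (ha : a = (δ₁ - Real.sqrt (δ₁ ^ 2 - 4 * α₁ * α₂)) / (2 * α₁))
    (hb : b = (δ₁ + Real.sqrt (δ₁ ^ 2 - 4 * α₁ * α₂)) / (2 * α₁))
    (V₀ : ℝ) (hV₀ : 0 ≤ V₀) (hV₀a : V₀ ^ (1 / μ) ≤ k * a) :
    ∫ V in (0:ℝ)..V₀, 1 / (α₁ * V ^ γ₁ + α₂ * V ^ γ₂ - δ₁ * V) ≤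
      μ / (α₁ * (b - a)) *
        (Real.log ((b - k * a) / (a * (1 - k))) - Real.log (b / a)) := by
  have hμ0 : (0:ℝ) < μ := lt_trans one_pos hμ
  set c : ℝ := 1 / μ with hc
  have hc0 : 0 < c := by positivity
  have hc1 : c < 1 := by rw [hc, div_lt_one hμ0]; exact hμ
  have hδ0 : 0 < δ₁ := lt_of_le_of_lt (by positivity) hδ
  have hdisc : 0 < δ₁ ^ 2 - 4 * α₁ * α₂ := by
    nlinarith [Real.sq_sqrt (by positivity : (0:ℝ) ≤ α₁ * α₂),
      Real.sqrt_nonneg (α₁ * α₂)]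
  set s := Real.sqrt (δ₁ ^ 2 - 4 * α₁ * α₂) with hs
  have hs2 : s ^ 2 = δ₁ ^ 2 - 4 * α₁ * α₂ := Real.sq_sqrt hdisc.le
  have hs0 : 0 < s := Real.sqrt_pos.mpr hdisc
  have hsδ : s < δ₁ := by nlinarith
  have ha0 : 0 < a := by rw [ha]; apply div_pos (by linarith) (by positivity)
  have hab : a < b := by
    rw [ha, hb, div_lt_div_iff₀ (by positivity) (by positivity)]; nlinarith
  have hb0 : 0 < b := lt_trans ha0 hab
  -- sum and product of roots
  have hsum : α₁ * (a + b) = δ₁ := by rw [ha, hb]; field_simp; ring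
  have hprod : α₁ * (a * b) = α₂ := by
    rw [ha, hb]; field_simp; nlinarith [hs2]
  have hquad : ∀ z : ℝ, α₁ * z ^ 2 - δ₁ * z + α₂ = α₁ * (a - z) * (b - z) := by
    intro z; linear_combination z * hsum - hprod
  have hka : k * a < a := by nlinarith
  have hbka : 0 < b - k * a := by nlinarith
  have haka : 0 < a - k * a := by nlinarith
  -- denominator identity
  have hden : ∀ V : ℝ, 0 < V →
      α₁ * V ^ γ₁ + α₂ * V ^ γ₂ - δ₁ * V
        = V ^ γ₂ * (α₁ * (a - V ^ c) * (b - V ^ c)) := by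
    intro V hV
    have h1 : V ^ γ₁ = V ^ γ₂ * (V ^ c * V ^ c) := by
      rw [← Real.rpow_add hV, ← Real.rpow_add hV, hγ₁, hγ₂]; ring_nf
    have h2 : V = V ^ γ₂ * V ^ c := by
      rw [← Real.rpow_add hV, hγ₂]
      norm_num
    linear_combination α₁ * h1 - δ₁ * h2 + V ^ γ₂ * hquad (V ^ c)
  -- bound on V^c for V in the interval
  have hmle : ∀ V : ℝ, 0 ≤ V → V ≤ V₀ → V ^ c ≤ k * a := fun V h0 hle =>
    le_trans (Real.rpow_le_rpow h0 hle hc0.le) hV₀a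
  set C : ℝ := μ / (α₁ * (b - a)) with hC
  have hC0 : 0 < C := by rw [hC]; exact div_pos hμ0 (mul_pos h1 (by linarith))
  set F : ℝ → ℝ := fun V => C * (Real.log (b - V ^ c) - Real.log (a - V ^ c)) with hF
  -- continuity of F on [0, V₀]
  have hcrpow : Continuous fun V : ℝ => V ^ c :=
    continuous_iff_continuousAt.mpr fun x => Real.continuousAt_rpow_const x c (Or.inr hc0.le)
  have hcont : ContinuousOn F (Set.Icc 0 V₀) := by
    apply ContinuousOn.mul continuousOn_const
    apply ContinuousOn.sub
    · apply ContinuousOn.log ((continuous_const.sub hcrpow).continuousOn)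
      intro x hx
      have := hmle x hx.1 hx.2
      show b - x ^ c ≠ 0
      nlinarith
    · apply ContinuousOn.log ((continuous_const.sub hcrpow).continuousOn)
      intro x hx
      have := hmle x hx.1 hx.2
      show a - x ^ c ≠ 0
      nlinarith
  -- derivative of F
  have hderiv : ∀ V ∈ Set.Ioo (0:ℝ) V₀,
      HasDerivWithinAt F (1 / (α₁ * V ^ γ₁ + α₂ * V ^ γ₂ - δ₁ * V)) (Set.Ioi V) V := by
    intro V hV
    obtain ⟨hV0, hVlt⟩ := hV
    have hm : V ^ c ≤ k * a := hmle V hV0.le hVlt.le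
    have ham : 0 < a - V ^ c := by nlinarith
    have hbm : 0 < b - V ^ c := by nlinarith
    have hd1 : HasDerivAt (fun V : ℝ => V ^ c) (c * V ^ (c - 1)) V :=
      Real.hasDerivAt_rpow_const (Or.inl hV0.ne')
    have hd2 : HasDerivAt (fun V : ℝ => b - V ^ c) (-(c * V ^ (c - 1))) V := by
      exact ((hasDerivAt_const V b).sub hd1).congr_deriv (by ring)
    have hd3 : HasDerivAt (fun V : ℝ => a - V ^ c) (-(c * V ^ (c - 1))) V := by
      exact ((hasDerivAt_const V a).sub hd1).congr_deriv (by ring)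
    have hdF : HasDerivAt F
        (C * (-(c * V ^ (c - 1)) / (b - V ^ c) - -(c * V ^ (c - 1)) / (a - V ^ c))) V :=
      ((hd2.log hbm.ne').sub (hd3.log ham.ne')).const_mul C
    have heq : C * (-(c * V ^ (c - 1)) / (b - V ^ c) - -(c * V ^ (c - 1)) / (a - V ^ c))
        = 1 / (α₁ * V ^ γ₁ + α₂ * V ^ γ₂ - δ₁ * V) := by
      have hVg : V ^ γ₂ * V ^ (c - 1) = 1 := by
        rw [← Real.rpow_add hV0, hγ₂]
        norm_num
      have hg2 : (0:ℝ) < V ^ γ₂ := Real.rpow_pos_of_pos hV0 _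
      have hVc1 : (0:ℝ) < V ^ (c - 1) := Real.rpow_pos_of_pos hV0 _
      have hba : (0:ℝ) < b - a := by linarith
      have e1 : -(c * V ^ (c - 1)) / (b - V ^ c) - -(c * V ^ (c - 1)) / (a - V ^ c)
          = c * V ^ (c - 1) * (b - a) / ((a - V ^ c) * (b - V ^ c)) := by
        field_simp
        ring
      have e2 : C * (c * V ^ (c - 1) * (b - a) / ((a - V ^ c) * (b - V ^ c)))
          = V ^ (c - 1) / (α₁ * ((a - V ^ c) * (b - V ^ c))) := by
        rw [hC, hc]
        field_simp
      have e3 : V ^ (c - 1) / (α₁ * ((a - V ^ c) * (b - V ^ c)))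
          = 1 / (V ^ γ₂ * (α₁ * (a - V ^ c) * (b - V ^ c))) := by
        rw [div_eq_div_iff (by positivity) (by positivity)]
        linear_combination α₁ * (a - V ^ c) * (b - V ^ c) * hVg
      rw [hden V hV0, e1, e2, e3]
    exact (heq ▸ hdF).hasDerivWithinAt
  -- integrability
  have hint : IntervalIntegrable
      (fun V => 1 / (α₁ * V ^ γ₁ + α₂ * V ^ γ₂ - δ₁ * V)) volume 0 V₀ := by
    rw [intervalIntegrable_iff_integrableOn_Ioc_of_le hV₀]
    set M : ℝ := 1 / (α₁ * (a - k * a) * (b - k * a)) with hM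
    have hM0 : 0 < M := by rw [hM]; positivity
    have hg : IntegrableOn (fun V : ℝ => M * V ^ (c - 1)) (Set.Ioc 0 V₀) := by
      rw [← intervalIntegrable_iff_integrableOn_Ioc_of_le hV₀]
      exact (intervalIntegrable_rpow' (by linarith)).const_mul M
    apply MeasureTheory.Integrable.mono hg
    · -- measurability
      apply ContinuousOn.aestronglyMeasurable _ measurableSet_Ioc
      apply ContinuousOn.div continuousOn_const
      · apply ContinuousOn.sub (ContinuousOn.add ?_ ?_) ?_
        · exact continuousOn_const.mul
            (continuous_iff_continuousAt.mpr fun x =>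
              Real.continuousAt_rpow_const x γ₁ (Or.inr (by rw [hγ₁]; positivity))).continuousOn
        · exact continuousOn_const.mul
            (continuous_iff_continuousAt.mpr fun x =>
              Real.continuousAt_rpow_const x γ₂ (Or.inr (by rw [hγ₂]; linarith))).continuousOn
        · exact (continuous_const.mul continuous_id).continuousOn
      · intro x hx
        rw [hden x hx.1]
        have hm := hmle x hx.1.le hx.2
        have hgp := Real.rpow_pos_of_pos hx.1 γ₂
        have h1' : 0 < a - x ^ c := by nlinarith
        have h2' : 0 < b - x ^ c := by nlinarith
        positivity
    · -- a.e. bound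
      rw [ae_restrict_iff' measurableSet_Ioc]
      apply ae_of_all
      intro V hV
      have hV0 := hV.1
      have hm : V ^ c ≤ k * a := hmle V hV0.le hV.2
      have ham : 0 < a - V ^ c := by nlinarith
      have hbm : 0 < b - V ^ c := by nlinarith
      have hg2 : (0:ℝ) < V ^ γ₂ := Real.rpow_pos_of_pos hV0 _
      have hdpos : 0 < α₁ * V ^ γ₁ + α₂ * V ^ γ₂ - δ₁ * V := by
        rw [hden V hV0]; positivity
      have hVg : V ^ (c - 1) = (V ^ γ₂)⁻¹ := by
        rw [← Real.rpow_neg hV0.le, hγ₂]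
        norm_num
      rw [Real.norm_eq_abs, Real.norm_eq_abs, abs_of_pos (by positivity),
        abs_of_pos (by positivity : (0:ℝ) < M * V ^ (c - 1))]
      rw [hden V hV0, hM, hVg]
      rw [div_le_iff₀ (by positivity)]
      have hmnn : 0 ≤ V ^ c := Real.rpow_nonneg hV0.le c
      have hX : 0 ≤ a + b - V ^ c - k * a := by nlinarith
      have key : α₁ * (a - k * a) * (b - k * a) ≤ α₁ * (a - V ^ c) * (b - V ^ c) := by
        nlinarith [mul_nonneg (sub_nonneg.mpr hm) hX, h1.le,
          mul_nonneg (mul_nonneg h1.le (sub_nonneg.mpr hm)) hX]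
      calc (1:ℝ) = (α₁ * (a - k * a) * (b - k * a)) * (1 / (α₁ * (a - k * a) * (b - k * a))) := by
              rw [mul_one_div_cancel (by positivity)]
        _ ≤ (α₁ * (a - V ^ c) * (b - V ^ c)) * (1 / (α₁ * (a - k * a) * (b - k * a))) := by
              apply mul_le_mul_of_nonneg_right key (by positivity)
        _ = 1 / (α₁ * (a - k * a) * (b - k * a)) * (V ^ γ₂)⁻¹ * (V ^ γ₂ * (α₁ * (a - V ^ c) * (b - V ^ c))) := by
              field_simp
  -- FTC
  have key := intervalIntegral.integral_eq_sub_of_hasDeriv_right_of_le hV₀ hcont hderiv hint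
  rw [key]
  have hF0 : F 0 = C * (Real.log b - Real.log a) := by
    simp [hF, Real.zero_rpow hc0.ne']
  have hm0 : 0 ≤ V₀ ^ c := Real.rpow_nonneg hV₀ c
  have hm : V₀ ^ c ≤ k * a := hV₀a
  have ham : 0 < a - V₀ ^ c := by linarith
  have hbm : 0 < b - V₀ ^ c := by linarith
  have hlog : Real.log (b - V₀ ^ c) - Real.log (a - V₀ ^ c)
      ≤ Real.log (b - k * a) - Real.log (a - k * a) := by
    rw [← Real.log_div hbm.ne' ham.ne', ← Real.log_div hbka.ne' haka.ne']
    apply Real.log_le_log (by positivity)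
    rw [div_le_div_iff₀ ham haka]
    nlinarith [mul_nonneg (sub_nonneg.mpr hab.le) (sub_nonneg.mpr hm)]
  have hrhs : a * (1 - k) = a - k * a := by ring
  rw [Real.log_div hbka.ne' (by rw [hrhs]; exact haka.ne'),
    Real.log_div hb0.ne' ha0.ne', hrhs, hF0]
  rw [hF]
  have : C * (Real.log (b - V₀ ^ c) - Real.log (a - V₀ ^ c)) - C * (Real.log b - Real.log a)
      ≤ C * (Real.log (b - k * a) - Real.log (a - k * a)) - C * (Real.log b - Real.log a) := by
    have := mul_le_mul_of_nonneg_left hlog hC0.le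
    linarith
  calc C * (Real.log (b - V₀ ^ c) - Real.log (a - V₀ ^ c)) - C * (Real.log b - Real.log a)
      ≤ C * (Real.log (b - k * a) - Real.log (a - k * a)) - C * (Real.log b - Real.log a) := this
    _ = C * (Real.log (b - k * a) - Real.log (a - k * a) - (Real.log b - Real.log a)) := by ring
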